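/- Let c(n,k,m) = F(n,k,P,m) where all n main blocks have exactly two elements (p_1 = ... = p_n = 2). Then for all n ≥ 2, k ≥ 0, m ≥ 0, c(n,k,m) = 2·c(n-1,k,m) + c(n-1,k-1,m), where c(n-1,-1,m) = 0. -/

import Mathlib

/-- The ground set: `n` main blocks, the `i`-th of size `p i`, plus an
additional block of size `m`. -/
abbrev InsetGround (n : ℕ) (p : Fin n → ℕ) (m : ℕ) : Type :=
  (Σ i : Fin n, Fin (p i)) ⊕ Fin m

/-- `F n p m k` is the number of `(n+k)`-subsets of the ground set that
intersect every main block (the "(n+k)-insets"). -/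
def F (n : ℕ) (p : Fin n → ℕ) (m k : ℕ) : ℕ :=
  ((Finset.univ : Finset (Finset (InsetGround n p m))).filter
    (fun U => U.card = n + k ∧
      ∀ i : Fin n, ∃ x : Σ j : Fin n, Fin (p j), x.1 = i ∧ Sum.inl x ∈ U)).card

/-- The inset-counting function with an integer parameter `k`, equal to `0`
when `k < 0` (the paper's convention `F(n,k,P,m) = 0` for `k < 0`). -/
def Fz (n : ℕ) (p : Fin n → ℕ) (m : ℕ) (k : ℤ) : ℕ :=
  if 0 ≤ k then F n p m k.toNat else 0

/-- `c n k m` is the number of `(n+k)`-insets when every main block has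
exactly two elements, with the convention that it vanishes for `k < 0`. -/
def c (n : ℕ) (k : ℤ) (m : ℕ) : ℕ :=
  Fz n (fun _ => 2) m k

namespace InsetAux

open Finset

abbrev Gr (n m : ℕ) := InsetGround n (fun _ => 2) m

def Hits (n m : ℕ) (U : Finset (Gr n m)) : Prop :=
  ∀ i : Fin n, ∃ x : Σ _ : Fin n, Fin 2, x.1 = i ∧ Sum.inl x ∈ U

instance (n m : ℕ) : DecidablePred (Hits n m) := fun _ => by
  unfold Hits; infer_instance

def H (n m t : ℕ) : ℕ :=
  ((Finset.univ : Finset (Finset (Gr n m))).filter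
    (fun U => U.card = t ∧ Hits n m U)).card

lemma H_eq_F (n m k : ℕ) : H n m (n + k) = F n (fun _ => 2) m k := by
  unfold H F Hits
  congr 1

def emb (n m : ℕ) : Gr n m ↪ Gr (n + 1) m :=
  ⟨Sum.map (fun x => ⟨x.1.castSucc, x.2⟩) id, by
    rintro (⟨i, a⟩ | u) (⟨j, b⟩ | v) h <;> simp [Sum.map] at h ⊢ <;> exact h⟩

lemma emb_ne_last {n m : ℕ} (x : Gr n m) (j : Fin 2) :
    emb n m x ≠ Sum.inl ⟨Fin.last n, j⟩ := by
  rcases x with ⟨i, a⟩ | u <;> simp [emb, Sum.map]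

lemma piece (n m t : ℕ) (b : Finset (Fin 2)) (hb : b.Nonempty) (hbt : b.card ≤ t) :
    ((Finset.univ : Finset (Finset (Gr (n + 1) m))).filter
      (fun U => U.card = t ∧ Hits (n + 1) m U ∧
        ∀ j : Fin 2, (Sum.inl ⟨Fin.last n, j⟩ ∈ U ↔ j ∈ b))).card
      = H n m (t - b.card) := by
  classical
  set bimg : Finset (Gr (n + 1) m) :=
    b.image (fun j => Sum.inl ⟨Fin.last n, j⟩) with hbimg
  have hinj : Function.Injective (fun j : Fin 2 => (Sum.inl ⟨Fin.last n, j⟩ : Gr (n + 1) m)) := by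
    intro a b h
    simpa using h
  have hbcard : bimg.card = b.card := Finset.card_image_of_injective _ hinj
  have hmem_bimg : ∀ (x : Gr (n + 1) m), x ∈ bimg ↔ ∃ j ∈ b, x = Sum.inl ⟨Fin.last n, j⟩ := by
    intro x
    simp [hbimg, eq_comm]
  have hdisj : ∀ V : Finset (Gr n m), Disjoint (V.map (emb n m)) bimg := by
    intro V
    rw [Finset.disjoint_left]
    intro x hx hxb
    obtain ⟨y, _, rfl⟩ := Finset.mem_map.mp hx
    obtain ⟨j, _, hj⟩ := (hmem_bimg _).mp hxb
    exact emb_ne_last y j hj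
  symm
  unfold H
  apply Finset.card_bij (fun V _ => V.map (emb n m) ∪ bimg)
  · -- maps into target
    rintro V hV
    rw [Finset.mem_filter] at hV ⊢
    obtain ⟨-, hVc, hVh⟩ := hV
    refine ⟨Finset.mem_univ _, ?_, ?_, ?_⟩
    · rw [Finset.card_union_of_disjoint (hdisj V), Finset.card_map, hVc, hbcard]
      omega
    · intro i
      rcases Fin.eq_castSucc_or_eq_last i with ⟨i', rfl⟩ | rfl
      · obtain ⟨x, hx1, hx2⟩ := hVh i'
        refine ⟨⟨x.1.castSucc, x.2⟩, by rw [hx1], ?_⟩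
        apply Finset.mem_union_left
        exact Finset.mem_map.mpr ⟨Sum.inl x, hx2, rfl⟩
      · obtain ⟨j, hj⟩ := hb
        exact ⟨⟨Fin.last n, j⟩, rfl, Finset.mem_union_right _
          ((hmem_bimg _).mpr ⟨j, hj, rfl⟩)⟩
    · intro j
      rw [Finset.mem_union]
      constructor
      · rintro (h | h)
        · obtain ⟨y, _, hy⟩ := Finset.mem_map.mp h
          exact absurd hy (emb_ne_last y j)
        · obtain ⟨j', hj', hjj⟩ := (hmem_bimg _).mp h
          have : j' = j := by simpa using hjj.symm
          exact this ▸ hj'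
      · intro hj
        exact Or.inr ((hmem_bimg _).mpr ⟨j, hj, rfl⟩)
  · -- injective
    intro V₁ h₁ V₂ h₂ h
    have := congrArg (· \ bimg) h
    simp only [Finset.union_sdiff_cancel_right (hdisj V₁),
      Finset.union_sdiff_cancel_right (hdisj V₂)] at this
    exact Finset.map_injective _ this
  · -- surjective
    intro U hU
    rw [Finset.mem_filter] at hU
    obtain ⟨-, hc, hh, hiff⟩ := hU
    have bsub : bimg ⊆ U := by
      intro x hx
      obtain ⟨j, hj, rfl⟩ := (hmem_bimg _).mp hx
      exact (hiff j).mpr hj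
    have hrange : ∀ x ∈ U \ bimg, x ∈ Set.range (emb n m) := by
      rintro (⟨i, a⟩ | u) hx
      · rw [Finset.mem_sdiff] at hx
        rcases Fin.eq_castSucc_or_eq_last i with ⟨i', rfl⟩ | rfl
        · exact ⟨Sum.inl ⟨i', a⟩, rfl⟩
        · exact absurd ((hmem_bimg _).mpr ⟨a, (hiff a).mp hx.1, rfl⟩) hx.2
      · exact ⟨Sum.inr u, rfl⟩
    refine ⟨((U \ bimg).preimage (emb n m) ((emb n m).injective.injOn)), ?_, ?_⟩
    · rw [Finset.mem_filter]
      have hmap : ((U \ bimg).preimage (emb n m) ((emb n m).injective.injOn)).map (emb n m)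
          = U \ bimg := by
        rw [Finset.map_eq_image, Finset.image_preimage]
        exact Finset.filter_true_of_mem hrange
      refine ⟨Finset.mem_univ _, ?_, ?_⟩
      · have := congrArg Finset.card hmap
        rw [Finset.card_map] at this
        rw [this, Finset.card_sdiff_of_subset bsub, hc, hbcard]
      · intro i
        obtain ⟨x, hx1, hx2⟩ := hh i.castSucc
        have hxnb : Sum.inl x ∉ bimg := by
          intro hmem
          obtain ⟨j, _, hj⟩ := (hmem_bimg _).mp hmem
          have : x.1 = Fin.last n := by
            injection hj with hj2
            try rw [hj2]
          rw [hx1] at this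
          exact (Fin.castSucc_lt_last i).ne this
        have hxW : Sum.inl x ∈ U \ bimg := Finset.mem_sdiff.mpr ⟨hx2, hxnb⟩
        refine ⟨⟨i, x.2⟩, rfl, ?_⟩
        rw [Finset.mem_preimage]
        have : emb n m (Sum.inl ⟨i, x.2⟩) = Sum.inl x := by
          show Sum.inl (⟨i.castSucc, x.2⟩ : Σ _ : Fin (n+1), Fin 2) = Sum.inl x
          rw [← hx1]
        rw [this]
        exact hxW
    · rw [Finset.map_eq_image, Finset.image_preimage, Finset.filter_true_of_mem hrange,
        Finset.sdiff_union_of_subset bsub]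

lemma H_zero (n m t : ℕ) (h : t < n) : H n m t = 0 := by
  unfold H
  rw [Finset.card_eq_zero, Finset.filter_eq_empty_iff]
  rintro U - ⟨hc, hh⟩
  have hle : n ≤ U.card := by
    have := Finset.card_le_card_of_injOn
      (s := (Finset.univ : Finset (Fin n))) (t := U)
      (fun i => Sum.inl (hh i).choose)
      (fun i _ => (hh i).choose_spec.2)
      (by
        intro i _ j _ hij
        have hx : (hh i).choose = (hh j).choose := Sum.inl_injective hij
        have := (hh i).choose_spec.1
        rw [hx, (hh j).choose_spec.1] at this
        exact this.symm)
    simpa using this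
  omega

lemma fin2 (j : Fin 2) : j = 0 ∨ j = 1 := by omega

lemma Hrec (n m T : ℕ) : H (n + 1) m (T + 2) = 2 * H n m (T + 1) + H n m T := by
  classical
  have key : ∀ (p : Finset (Gr (n + 1) m) → Prop) [DecidablePred p]
      (r : Finset (Gr (n + 1) m) → Prop) [DecidablePred r],
      (Finset.univ.filter p).card =
        (Finset.univ.filter (fun U => p U ∧ r U)).card +
        (Finset.univ.filter (fun U => p U ∧ ¬ r U)).card := by
    intro p _ r _
    rw [← Finset.filter_filter, ← Finset.filter_filter,
      Finset.card_filter_add_card_filter_not]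
  have hH : H (n + 1) m (T + 2) = (Finset.univ.filter
      (fun U : Finset (Gr (n + 1) m) => U.card = T + 2 ∧ Hits (n + 1) m U)).card := rfl
  rw [hH,
    key (fun U : Finset (Gr (n + 1) m) => U.card = T + 2 ∧ Hits (n + 1) m U)
      (fun U => Sum.inl ⟨Fin.last n, (0 : Fin 2)⟩ ∈ U),
    key (fun U : Finset (Gr (n + 1) m) =>
        (U.card = T + 2 ∧ Hits (n + 1) m U) ∧ Sum.inl ⟨Fin.last n, (0 : Fin 2)⟩ ∈ U)
      (fun U => Sum.inl ⟨Fin.last n, (1 : Fin 2)⟩ ∈ U),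
    key (fun U : Finset (Gr (n + 1) m) =>
        (U.card = T + 2 ∧ Hits (n + 1) m U) ∧ ¬ Sum.inl ⟨Fin.last n, (0 : Fin 2)⟩ ∈ U)
      (fun U => Sum.inl ⟨Fin.last n, (1 : Fin 2)⟩ ∈ U)]
  have empty4 : (Finset.univ.filter (fun U : Finset (Gr (n + 1) m) =>
      ((U.card = T + 2 ∧ Hits (n + 1) m U) ∧ ¬ Sum.inl ⟨Fin.last n, (0 : Fin 2)⟩ ∈ U) ∧
        ¬ Sum.inl ⟨Fin.last n, (1 : Fin 2)⟩ ∈ U)).card = 0 := by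
    rw [Finset.card_eq_zero, Finset.filter_eq_empty_iff]
    rintro U - ⟨⟨⟨-, hh⟩, h0⟩, h1⟩
    obtain ⟨x, hx1, hx2⟩ := hh (Fin.last n)
    have hx : x = ⟨Fin.last n, x.2⟩ := by
      rw [← hx1]
    rcases fin2 x.2 with h | h <;> rw [h] at hx <;> rw [hx] at hx2
    · exact h0 hx2
    · exact h1 hx2
  have pc01 : (Finset.univ.filter (fun U : Finset (Gr (n + 1) m) =>
      ((U.card = T + 2 ∧ Hits (n + 1) m U) ∧ Sum.inl ⟨Fin.last n, (0 : Fin 2)⟩ ∈ U) ∧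
        Sum.inl ⟨Fin.last n, (1 : Fin 2)⟩ ∈ U)).card = H n m T := by
    have h5 := piece n m (T + 2) ({0, 1} : Finset (Fin 2)) (by simp) (by simp)
    have h2 : T + 2 - ({0, 1} : Finset (Fin 2)).card = T := by simp
    rw [h2] at h5
    rw [← h5]
    congr 1
    apply Finset.filter_congr
    intro U _
    constructor
    · rintro ⟨⟨⟨hcard, hhits⟩, h0⟩, h1⟩
      refine ⟨hcard, hhits, fun j => ?_⟩
      rcases fin2 j with rfl | rfl
      · simpa using h0
      · simpa using h1
    · rintro ⟨hcard, hhits, hiff⟩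
      exact ⟨⟨⟨hcard, hhits⟩, (hiff 0).mpr (by simp)⟩, (hiff 1).mpr (by simp)⟩
  have pc0 : (Finset.univ.filter (fun U : Finset (Gr (n + 1) m) =>
      ((U.card = T + 2 ∧ Hits (n + 1) m U) ∧ Sum.inl ⟨Fin.last n, (0 : Fin 2)⟩ ∈ U) ∧
        ¬ Sum.inl ⟨Fin.last n, (1 : Fin 2)⟩ ∈ U)).card = H n m (T + 1) := by
    have h5 := piece n m (T + 2) ({0} : Finset (Fin 2)) (by simp) (by simp)
    have h2 : T + 2 - ({0} : Finset (Fin 2)).card = T + 1 := by simp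
    rw [h2] at h5
    rw [← h5]
    congr 1
    apply Finset.filter_congr
    intro U _
    constructor
    · rintro ⟨⟨⟨hcard, hhits⟩, h0⟩, h1⟩
      refine ⟨hcard, hhits, fun j => ?_⟩
      rcases fin2 j with rfl | rfl
      · simpa using h0
      · simpa using h1
    · rintro ⟨hcard, hhits, hiff⟩
      refine ⟨⟨⟨hcard, hhits⟩, (hiff 0).mpr (by simp)⟩, fun hcon => ?_⟩
      simpa using (hiff 1).mp hcon
  have pc1 : (Finset.univ.filter (fun U : Finset (Gr (n + 1) m) =>
      ((U.card = T + 2 ∧ Hits (n + 1) m U) ∧ ¬ Sum.inl ⟨Fin.last n, (0 : Fin 2)⟩ ∈ U) ∧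
        Sum.inl ⟨Fin.last n, (1 : Fin 2)⟩ ∈ U)).card = H n m (T + 1) := by
    have h5 := piece n m (T + 2) ({1} : Finset (Fin 2)) (by simp) (by simp)
    have h2 : T + 2 - ({1} : Finset (Fin 2)).card = T + 1 := by simp
    rw [h2] at h5
    rw [← h5]
    congr 1
    apply Finset.filter_congr
    intro U _
    constructor
    · rintro ⟨⟨⟨hcard, hhits⟩, h0⟩, h1⟩
      refine ⟨hcard, hhits, fun j => ?_⟩
      rcases fin2 j with rfl | rfl
      · simpa using h0
      · simpa using h1
    · rintro ⟨hcard, hhits, hiff⟩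
      refine ⟨⟨⟨hcard, hhits⟩, fun hcon => ?_⟩, (hiff 1).mpr (by simp)⟩
      simpa using (hiff 0).mp hcon
  rw [empty4, pc01, pc0, pc1]
  ring

end InsetAux

theorem stmt_11 (n : ℕ) (hn : 2 ≤ n) (k : ℤ) (hk : 0 ≤ k) (m : ℕ) :
    c n k m = 2 * c (n - 1) k m + c (n - 1) (k - 1) m := by
  obtain ⟨n', rfl⟩ : ∃ n', n = n' + 2 := ⟨n - 2, by omega⟩
  set κ := k.toNat with hκ
  have hn1 : n' + 2 - 1 = n' + 1 := rfl
  have hc : c (n' + 2) k m = InsetAux.H (n' + 2) m ((n' + κ) + 2) := by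
    rw [c, Fz, if_pos hk, ← InsetAux.H_eq_F]
    congr 1
    omega
  have hc1 : c (n' + 2 - 1) k m = InsetAux.H (n' + 1) m ((n' + κ) + 1) := by
    rw [hn1, c, Fz, if_pos hk, ← InsetAux.H_eq_F]
    congr 1
    omega
  have hc2 : c (n' + 2 - 1) (k - 1) m = InsetAux.H (n' + 1) m (n' + κ) := by
    rw [hn1]
    rcases Nat.eq_zero_or_pos κ with h0 | hpos
    · rw [c, Fz, if_neg (by omega), h0, InsetAux.H_zero (n' + 1) m (n' + 0) (by omega)]
    · rw [c, Fz, if_pos (by omega : (0:ℤ) ≤ k - 1), ← InsetAux.H_eq_F]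
      congr 1
      omega
  rw [hc, hc1, hc2]
  exact InsetAux.Hrec (n' + 1) m (n' + κ)
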